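/- arXiv:2104.05868 — 5 statements merged into one kernel-verified Lean document; each statement's English description precedes it below -/
import Mathlib

section
/- Let C : ℝ^m → ℝ be continuously differentiable and 2π-periodic in each coordinate, and suppose that for every unit vector direction and every index j, Var_θ[∂_j C(θ)] ≤ F (with θ uniform on the torus, and the translation invariance of the uniform measure). Then for any fixed L > 0 and unit vector e, Var_θ[C(θ + L·e) − C(θ)] ≤ m² L² F. -/
open MeasureTheory ProbabilityTheory Real

/-- The uniform probability measure on the cube `[0, 2π]^m` (the torus). -/
noncomputable def unifTorus (m : ℕ) : Measure (Fin m → ℝ) :=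
  Measure.pi fun _ => (ENNReal.ofReal (2 * π))⁻¹ • volume.restrict (Set.Icc 0 (2 * π))

namespace BarrenAux

open Set

instance fact_two_pi_pos : Fact ((0:ℝ) < 2 * π) := ⟨by have := Real.pi_pos; linarith⟩

/-- pi of measure preserving maps is measure preserving. -/
theorem measurePreserving_pi' {ι : Type*} [Fintype ι] {α β : ι → Type*}
    [∀ i, MeasurableSpace (α i)] [∀ i, MeasurableSpace (β i)]
    (μ : ∀ i, Measure (α i)) (ν : ∀ i, Measure (β i))
    [∀ i, SigmaFinite (μ i)] [∀ i, SigmaFinite (ν i)]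
    {f : ∀ i, α i → β i} (hf : ∀ i, MeasurePreserving (f i) (μ i) (ν i)) :
    MeasurePreserving (fun (x : ∀ i, α i) i => f i (x i)) (Measure.pi μ) (Measure.pi ν) := by
  have hmeas : Measurable fun (x : ∀ i, α i) i => f i (x i) :=
    measurable_pi_iff.2 fun i => (hf i).measurable.comp (measurable_pi_apply i)
  refine ⟨hmeas, ?_⟩
  refine (Measure.pi_eq fun s hs => ?_).symm
  rw [Measure.map_apply hmeas (MeasurableSet.univ_pi hs)]
  have h2 : (fun (x : ∀ i, α i) i => f i (x i)) ⁻¹' Set.pi Set.univ s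
      = Set.pi Set.univ fun i => f i ⁻¹' s i := by ext x; simp [Set.mem_pi]
  rw [h2, Measure.pi_pi]
  exact Finset.prod_congr rfl fun i _ => (hf i).measure_preimage (hs i).nullMeasurableSet

lemma coordProb : IsProbabilityMeasure
    ((ENNReal.ofReal (2 * π))⁻¹ • (volume : Measure ℝ).restrict (Set.Icc 0 (2 * π))) := by
  constructor
  rw [Measure.smul_apply, Measure.restrict_apply MeasurableSet.univ, Set.univ_inter,
    Real.volume_Icc, smul_eq_mul, sub_zero]
  exact ENNReal.inv_mul_cancel (by simp [fact_two_pi_pos.out, Real.pi_pos]) ENNReal.ofReal_ne_top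

instance unifTorus_prob (m : ℕ) : IsProbabilityMeasure (unifTorus m) := by
  haveI := coordProb
  unfold unifTorus
  infer_instance

noncomputable def nuT (m : ℕ) : Measure (Fin m → AddCircle (2 * π)) :=
  Measure.pi fun _ => (ENNReal.ofReal (2 * π))⁻¹ • (volume : Measure (AddCircle (2 * π)))

lemma nuCoordProb : IsProbabilityMeasure
    ((ENNReal.ofReal (2 * π))⁻¹ • (volume : Measure (AddCircle (2 * π)))) := by
  constructor
  rw [Measure.smul_apply, AddCircle.measure_univ, smul_eq_mul]
  exact ENNReal.inv_mul_cancel (by simp [fact_two_pi_pos.out, Real.pi_pos]) ENNReal.ofReal_ne_top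

instance nuT_prob (m : ℕ) : IsProbabilityMeasure (nuT m) := by
  haveI := nuCoordProb
  unfold nuT
  infer_instance

lemma nuT_invariant (m : ℕ) : Measure.IsAddLeftInvariant (nuT m) := by
  haveI := nuCoordProb
  exact Measure.pi.isAddLeftInvariant _

lemma mp_coord : MeasurePreserving (fun x : ℝ => (x : AddCircle (2 * π)))
    ((ENNReal.ofReal (2 * π))⁻¹ • (volume : Measure ℝ).restrict (Set.Icc 0 (2 * π)))
    ((ENNReal.ofReal (2 * π))⁻¹ • (volume : Measure (AddCircle (2 * π)))) := by
  have h := AddCircle.measurePreserving_mk (2 * π) 0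
  rw [zero_add] at h
  have hres : (volume : Measure ℝ).restrict (Set.Ioc 0 (2 * π))
      = (volume : Measure ℝ).restrict (Set.Icc 0 (2 * π)) :=
    Measure.restrict_congr_set Ioc_ae_eq_Icc
  rw [hres] at h
  exact ⟨h.measurable, by rw [Measure.map_smul, h.map_eq]⟩

/-- The quotient map onto the torus. -/
noncomputable def Qmap (m : ℕ) : (Fin m → ℝ) → (Fin m → AddCircle (2 * π)) :=
  fun θ i => (θ i : AddCircle (2 * π))

lemma mpQ (m : ℕ) : MeasurePreserving (Qmap m) (unifTorus m) (nuT m) := by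
  haveI := coordProb
  haveI := nuCoordProb
  exact measurePreserving_pi' _ _ (fun _ => mp_coord)

section periodic

variable {m : ℕ} {f : (Fin m → ℝ) → ℝ}

/-- integer-multiple periodicity in one coordinate -/
lemma per_int (hper : ∀ θ i, f (θ + Pi.single i (2 * π)) = f θ) (k : ℤ) :
    ∀ (θ : Fin m → ℝ) (i : Fin m), f (θ + Pi.single i ((k : ℝ) * (2 * π))) = f θ := by
  induction k using Int.induction_on with
  | zero => intro θ i; simp
  | succ n ih =>
      intro θ i
      have e : θ + Pi.single i (((n : ℤ) + 1 : ℤ) * (2 * π) : ℝ)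
          = (θ + Pi.single i (((n : ℤ) : ℝ) * (2 * π))) + Pi.single i (2 * π) := by
        ext j
        rcases eq_or_ne j i with h | h
        · subst h; simp [Pi.single_apply]; ring
        · simp [Pi.single_apply, h]
      rw [e, hper, ih]
  | pred n ih =>
      intro θ i
      have e : (θ + Pi.single i (((-(n : ℤ) - 1 : ℤ) : ℝ) * (2 * π))) + Pi.single i (2 * π)
          = θ + Pi.single i (((-(n : ℤ) : ℤ) : ℝ) * (2 * π)) := by
        ext j
        rcases eq_or_ne j i with h | h
        · subst h; simp [Pi.single_apply]; ring
        · simp [Pi.single_apply, h]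
      calc f (θ + Pi.single i (((-(n : ℤ) - 1 : ℤ) : ℝ) * (2 * π)))
          = f ((θ + Pi.single i (((-(n : ℤ) - 1 : ℤ) : ℝ) * (2 * π))) + Pi.single i (2 * π)) :=
            (hper _ i).symm
        _ = f (θ + Pi.single i (((-(n : ℤ) : ℤ) : ℝ) * (2 * π))) := by rw [e]
        _ = f θ := ih θ i

/-- multi-coordinate integer periodicity -/
lemma per_shift (hper : ∀ θ i, f (θ + Pi.single i (2 * π)) = f θ) (n : Fin m → ℤ)
    (θ : Fin m → ℝ) : f (θ + fun i => (n i : ℝ) * (2 * π)) = f θ := by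
  have key : ∀ s : Finset (Fin m), ∀ θ : Fin m → ℝ,
      f (θ + ∑ i ∈ s, Pi.single i ((n i : ℝ) * (2 * π))) = f θ := by
    intro s
    induction s using Finset.induction_on with
    | empty => intro θ; simp
    | insert a s' hx ih =>
        intro θ
        rw [Finset.sum_insert hx, show θ + (Pi.single a ((n a : ℝ) * (2 * π)) +
            ∑ i ∈ s', Pi.single i ((n i : ℝ) * (2 * π)))
          = (θ + ∑ i ∈ s', Pi.single i ((n i : ℝ) * (2 * π)))
            + Pi.single a ((n a : ℝ) * (2 * π)) by abel]
        rw [per_int hper (n a) _ a, ih θ]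
  have hsum : (fun i => (n i : ℝ) * (2 * π))
      = ∑ i, Pi.single i ((n i : ℝ) * (2 * π)) := by
    ext j; rw [Finset.univ_sum_single (f := fun i => (n i : ℝ) * (2 * π))]
  rw [hsum]
  exact key Finset.univ θ

/-- canonical representative in the cube -/
lemma exists_rep (θ : Fin m → ℝ) : ∃ n : Fin m → ℤ,
    (∀ i, θ i + (n i : ℝ) * (2 * π) ∈ Set.Icc (0:ℝ) (2 * π)) ∧
    (∀ i, θ i + (n i : ℝ) * (2 * π) = Int.fract (θ i / (2 * π)) * (2 * π)) := by
  have hp : (0:ℝ) < 2 * π := fact_two_pi_pos.out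
  have h1 : ∀ i, θ i + (((-⌊θ i / (2 * π)⌋ : ℤ) : ℝ)) * (2 * π)
      = Int.fract (θ i / (2 * π)) * (2 * π) := by
    intro i
    rw [Int.fract]
    push_cast
    field_simp
    ring
  refine ⟨fun i => -⌊θ i / (2 * π)⌋, fun i => ?_, h1⟩
  rw [h1 i]
  constructor
  · exact mul_nonneg (Int.fract_nonneg _) hp.le
  · nlinarith [Int.fract_lt_one (θ i / (2 * π)), Int.fract_nonneg (θ i / (2 * π))]

/-- periodic continuous functions are bounded -/
lemma bounded_of_periodic (hf : Continuous f)
    (hper : ∀ θ i, f (θ + Pi.single i (2 * π)) = f θ) :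
    ∃ M : ℝ, 0 ≤ M ∧ ∀ θ, |f θ| ≤ M := by
  have hK : IsCompact (Set.Icc (0 : Fin m → ℝ) (fun _ => 2 * π)) := isCompact_Icc
  obtain ⟨M, hM⟩ := hK.exists_bound_of_continuousOn hf.continuousOn
  refine ⟨max M 0, le_max_right _ _, fun θ => ?_⟩
  obtain ⟨n, hmem, -⟩ := exists_rep θ
  have heq : f (θ + fun i => (n i : ℝ) * (2 * π)) = f θ := per_shift hper n θ
  have hmem' : (θ + fun i => (n i : ℝ) * (2 * π)) ∈
      Set.Icc (0 : Fin m → ℝ) (fun _ => 2 * π) := by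
    rw [Set.mem_Icc]
    constructor
    · intro i; simpa using (hmem i).1
    · intro i; simpa using (hmem i).2
  calc |f θ| = |f (θ + fun i => (n i : ℝ) * (2 * π))| := by rw [heq]
    _ ≤ M := by simpa [Real.norm_eq_abs] using hM _ hmem'
    _ ≤ max M 0 := le_max_left _ _

/-- lift of a periodic function to the torus -/
noncomputable def liftT (m : ℕ) (f : (Fin m → ℝ) → ℝ) :
    (Fin m → AddCircle (2 * π)) → ℝ :=
  fun x => f (fun i => ((AddCircle.equivIco (2 * π) 0 (x i) : ℝ)))

lemma liftT_measurable (hf : Measurable f) : Measurable (liftT m f) := by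
  apply hf.comp
  refine measurable_pi_iff.2 fun i => ?_
  exact (measurable_subtype_coe.comp
    (AddCircle.measurableEquivIco (2 * π) 0).measurable).comp (measurable_pi_apply i)

lemma liftT_comp (hper : ∀ θ i, f (θ + Pi.single i (2 * π)) = f θ) (θ : Fin m → ℝ) :
    liftT m f (Qmap m θ) = f θ := by
  unfold liftT Qmap
  have hco : ∀ i, ((AddCircle.equivIco (2 * π) 0 ((θ i : AddCircle (2 * π)))) : ℝ)
      = Int.fract (θ i / (2 * π)) * (2 * π) := by
    intro i
    exact_mod_cast congrArg Subtype.val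
      (congrArg (AddCircle.equivIco (2 * π) 0) rfl) |>.trans
      (by exact_mod_cast AddCircle.coe_equivIco_mk_apply (2 * π) (θ i))
  obtain ⟨n, -, hfr⟩ := exists_rep θ
  have : (fun i => ((AddCircle.equivIco (2 * π) 0 ((θ i : AddCircle (2 * π)))) : ℝ))
      = θ + fun i => (n i : ℝ) * (2 * π) := by
    ext i; rw [hco i, ← hfr i]; rfl
  rw [this, per_shift hper n θ]

/-- Key lemma: shift invariance of integrals of periodic functions. -/
lemma integral_shift {m : ℕ} (f : (Fin m → ℝ) → ℝ) (hf : Measurable f)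
    (hper : ∀ θ i, f (θ + Pi.single i (2 * π)) = f θ) (v : Fin m → ℝ) :
    ∫ θ, f (θ + v) ∂(unifTorus m) = ∫ θ, f θ ∂(unifTorus m) := by
  haveI := nuT_invariant m
  have hlm : Measurable (liftT m f) := liftT_measurable hf
  have hshift : MeasurePreserving (fun θ : Fin m → ℝ => Qmap m v + Qmap m θ)
      (unifTorus m) (nuT m) :=
    (measurePreserving_add_left (nuT m) (Qmap m v)).comp (mpQ m)
  have h1 : ∀ θ : Fin m → ℝ, f (θ + v) = liftT m f (Qmap m v + Qmap m θ) := by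
    intro θ
    have : Qmap m v + Qmap m θ = Qmap m (θ + v) := by
      ext i; simp [Qmap, add_comm]
    rw [this, liftT_comp hper]
  have h2 : ∫ θ, f (θ + v) ∂(unifTorus m) = ∫ x, liftT m f x ∂(nuT m) := by
    simp_rw [h1]
    rw [← hshift.map_eq, integral_map hshift.measurable.aemeasurable]
    rw [hshift.map_eq]
    exact hlm.aestronglyMeasurable
  have h3 : ∫ θ, f θ ∂(unifTorus m) = ∫ x, liftT m f x ∂(nuT m) := by
    have : ∀ θ : Fin m → ℝ, f θ = liftT m f (Qmap m θ) := fun θ => (liftT_comp hper θ).symm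
    simp_rw [this]
    rw [← (mpQ m).map_eq, integral_map (mpQ m).measurable.aemeasurable]
    rw [(mpQ m).map_eq]
    exact hlm.aestronglyMeasurable
  rw [h2, h3]

end periodic

/-- variance is at most the second moment about any point -/
theorem variance_le_integral_sq {Ω : Type*} [MeasurableSpace Ω] {μ : Measure Ω}
    [IsProbabilityMeasure μ] {X : Ω → ℝ} (hX : MemLp X 2 μ) (c : ℝ) :
    variance X μ ≤ ∫ ω, (X ω - c) ^ 2 ∂μ := by
  have hXi : Integrable X μ := hX.integrable one_le_two
  have hX2 : Integrable (fun ω => X ω ^ 2) μ := hX.integrable_sq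
  have hexp : ∫ ω, (X ω - c) ^ 2 ∂μ
      = (∫ ω, X ω ^ 2 ∂μ) - 2 * c * (∫ ω, X ω ∂μ) + c ^ 2 := by
    have h : ∀ ω, (X ω - c) ^ 2 = X ω ^ 2 - 2 * c * X ω + c ^ 2 := fun ω => by ring
    have hi1 : Integrable (fun ω => X ω ^ 2 - 2 * c * X ω) μ := by
      exact hX2.sub (hXi.const_mul (2 * c))
    have hi2 : Integrable (fun ω => 2 * c * X ω) μ := hXi.const_mul (2 * c)
    calc ∫ ω, (X ω - c) ^ 2 ∂μ
        = ∫ ω, (X ω ^ 2 - 2 * c * X ω + c ^ 2) ∂μ := by simp_rw [h]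
      _ = (∫ ω, (X ω ^ 2 - 2 * c * X ω) ∂μ) + ∫ _ω, (c ^ 2 : ℝ) ∂μ :=
          integral_add hi1 (integrable_const _)
      _ = (∫ ω, X ω ^ 2 ∂μ) - (∫ ω, 2 * c * X ω ∂μ) + c ^ 2 := by
          rw [integral_sub hX2 hi2, integral_const]; simp [measure_univ]
      _ = (∫ ω, X ω ^ 2 ∂μ) - 2 * c * (∫ ω, X ω ∂μ) + c ^ 2 := by
          rw [integral_const_mul]
  rw [variance_eq_sub hX, hexp]
  have h1 : μ[X ^ 2] = ∫ ω, X ω ^ 2 ∂μ := by simp [Pi.pow_apply]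
  rw [h1]
  nlinarith [sq_nonneg ((∫ ω, X ω ∂μ) - c)]

/-- Cauchy-Schwarz for interval integrals of continuous functions -/
theorem sq_intervalIntegral_le {L : ℝ} (hL : 0 < L) {h : ℝ → ℝ} (hh : Continuous h) :
    (∫ t in (0:ℝ)..L, h t) ^ 2 ≤ L * ∫ t in (0:ℝ)..L, (h t) ^ 2 := by
  set P : Measure ℝ := (ENNReal.ofReal L)⁻¹ • volume.restrict (Set.Ioc 0 L) with hP
  haveI : IsProbabilityMeasure P := by
    constructor
    rw [hP, Measure.smul_apply, Measure.restrict_apply MeasurableSet.univ, Set.univ_inter,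
      Real.volume_Ioc, smul_eq_mul, sub_zero]
    exact ENNReal.inv_mul_cancel (by simp [hL]) ENNReal.ofReal_ne_top
  obtain ⟨M, hM⟩ :=
    (isCompact_Icc (a := (0:ℝ)) (b := L)).exists_bound_of_continuousOn hh.continuousOn
  have hae : ∀ᵐ t ∂P, -M ≤ h t ∧ h t ≤ M := by
    rw [hP]; refine Measure.ae_smul_measure ?_ _
    filter_upwards [ae_restrict_mem measurableSet_Ioc] with t ht
    have hb := hM t ⟨ht.1.le, ht.2⟩
    rw [Real.norm_eq_abs] at hb
    exact abs_le.1 hb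
  have hmem : MemLp h 2 P := memLp_of_bounded hae hh.aestronglyMeasurable 2
  have hvar : 0 ≤ P[h ^ 2] - P[h] ^ 2 := by
    have := variance_nonneg h P
    rw [variance_eq_sub hmem] at this
    linarith
  have hconv : ∀ g : ℝ → ℝ, ∫ t, g t ∂P = (1 / L) * ∫ t in (0:ℝ)..L, g t := by
    intro g
    rw [hP, integral_smul_measure, intervalIntegral.integral_of_le hL.le,
      ENNReal.toReal_inv, ENNReal.toReal_ofReal hL.le, smul_eq_mul, one_div]
  have h1 : P[h ^ 2] = (1 / L) * ∫ t in (0:ℝ)..L, (h t) ^ 2 := by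
    have : P[h ^ 2] = ∫ t, (h t) ^ 2 ∂P := by simp [Pi.pow_apply]
    rw [this, hconv]
  have h2 : P[h] = (1 / L) * ∫ t in (0:ℝ)..L, h t := hconv h
  rw [h1, h2] at hvar
  set A : ℝ := ∫ t in (0:ℝ)..L, (h t) ^ 2 with hA
  set Bq : ℝ := ∫ t in (0:ℝ)..L, h t with hB
  have e1 : Bq ^ 2 = L ^ 2 * ((1 / L) * Bq) ^ 2 := by
    field_simp
  have e2 : L ^ 2 * ((1 / L) * A) = L * A := by
    field_simp
  have e3 : L ^ 2 * ((1 / L) * Bq) ^ 2 ≤ L ^ 2 * ((1 / L) * A) := by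
    have hh2 : ((1 / L) * Bq) ^ 2 ≤ (1 / L) * A := by linarith
    exact mul_le_mul_of_nonneg_left hh2 (by positivity)
  calc Bq ^ 2 = L ^ 2 * ((1 / L) * Bq) ^ 2 := e1
    _ ≤ L ^ 2 * ((1 / L) * A) := e3
    _ = L * A := e2

end BarrenAux

/-- Barren plateaus imply cost concentration: if the variance of every partial derivative of a
continuously differentiable, coordinatewise `2π`-periodic cost is bounded by `F`, then the
variance of the finite difference along any fixed direction `e` (a unit vector) and distance
`L` is at most `m² L² F`. -/
theorem variance_shift_diff_le (m : ℕ) (C : (Fin m → ℝ) → ℝ)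
    (hC : ContDiff ℝ 1 C)
    (hper : ∀ (θ : Fin m → ℝ) (i : Fin m), C (θ + Pi.single i (2 * π)) = C θ)
    (hL2 : ∀ j : Fin m,
      MemLp (fun θ => fderiv ℝ C θ (Pi.single j 1)) 2 (unifTorus m))
    (F : ℝ) (hF : 0 ≤ F)
    (hvar : ∀ j : Fin m,
      variance (fun θ => fderiv ℝ C θ (Pi.single j 1)) (unifTorus m) ≤ F)
    (L : ℝ) (hL : 0 < L) (e : Fin m → ℝ) (he : ∑ i, e i ^ 2 = 1) :
    variance (fun θ => C (θ + L • e) - C θ) (unifTorus m)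
      ≤ (m : ℝ) ^ 2 * L ^ 2 * F := by
  classical
  haveI : IsProbabilityMeasure (unifTorus m) := BarrenAux.unifTorus_prob m
  have hπ : (0:ℝ) < 2 * π := BarrenAux.fact_two_pi_pos.out
  -- m is at least 1
  have hm1 : (1:ℝ) ≤ (m:ℝ) := by
    rcases Nat.eq_zero_or_pos m with h0 | h1
    · exfalso; subst h0; simp at he
    · exact_mod_cast h1
  -- basic regularity
  have hCd : Differentiable ℝ C := hC.differentiable one_ne_zero
  have hfc : Continuous (fderiv ℝ C) := hC.continuous_fderiv one_ne_zero
  -- notation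
  set μ := unifTorus m with hμdef
  let D : Fin m → (Fin m → ℝ) → ℝ := fun j θ => fderiv ℝ C θ (Pi.single j 1)
  let G : (Fin m → ℝ) → ℝ := fun θ => fderiv ℝ C θ e
  have hL2' : ∀ j, MemLp (D j) 2 μ := hL2
  have hvar' : ∀ j, variance (D j) μ ≤ F := hvar
  have hGcont : Continuous G :=
    ((ContinuousLinearMap.apply ℝ ℝ e).continuous).comp hfc
  have hDcont : ∀ j, Continuous (D j) := fun j =>
    ((ContinuousLinearMap.apply ℝ ℝ (Pi.single j 1)).continuous).comp hfc
  -- periodicity of the derivative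
  have hfper : ∀ (θ : Fin m → ℝ) (i : Fin m),
      fderiv ℝ C (θ + Pi.single i (2 * π)) = fderiv ℝ C θ := by
    intro θ i
    have htr : HasFDerivAt (fun x => C (x + Pi.single i (2 * π)))
        (fderiv ℝ C (θ + Pi.single i (2 * π))) θ := by
      have h1 : HasFDerivAt (fun x : Fin m → ℝ => x + Pi.single i (2 * π))
          (ContinuousLinearMap.id ℝ (Fin m → ℝ)) θ :=
        (hasFDerivAt_id θ).add_const _
      have h2 := (hCd (θ + Pi.single i (2 * π))).hasFDerivAt.comp θ h1
      exact h2
    have heqfun : (fun x => C (x + Pi.single i (2 * π))) = C := funext fun x => hper x i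
    rw [heqfun] at htr
    rw [← htr.fderiv]
  have hGper : ∀ (θ : Fin m → ℝ) (i : Fin m), G (θ + Pi.single i (2 * π)) = G θ := by
    intro θ i; show fderiv ℝ C _ e = fderiv ℝ C θ e; rw [hfper]
  -- mean of G
  set Mbar : ℝ := ∫ θ, G θ ∂μ with hMbardef
  let Mj : Fin m → ℝ := fun j => ∫ θ, D j θ ∂μ
  -- G as a linear combination of the D j
  have hGsum : ∀ θ, G θ = ∑ j, e j * D j θ := by
    intro θ
    have he2 : e = ∑ j, Pi.single j (e j) :=
      (Finset.univ_sum_single e).symm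
    calc G θ = fderiv ℝ C θ (∑ j, Pi.single j (e j)) := by
          exact congrArg (fun v => fderiv ℝ C θ v) he2
      _ = ∑ j, fderiv ℝ C θ (Pi.single j (e j)) := map_sum _ _ _
      _ = ∑ j, e j * D j θ := by
          refine Finset.sum_congr rfl fun j _ => ?_
          have h1 : (Pi.single j (e j) : Fin m → ℝ)
              = e j • (Pi.single j (1:ℝ) : Fin m → ℝ) := by
            rw [← Pi.single_smul, smul_eq_mul, mul_one]
          rw [h1, ContinuousLinearMap.map_smul, smul_eq_mul]
  have hDint : ∀ j, Integrable (D j) μ := fun j => (hL2' j).integrable one_le_two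
  have hMbar_sum : Mbar = ∑ j, e j * Mj j := by
    rw [hMbardef]
    have : (fun θ => G θ) = fun θ => ∑ j, e j * D j θ := funext hGsum
    rw [this, integral_finset_sum _ fun j _ => (hDint j).const_mul (e j)]
    exact Finset.sum_congr rfl fun j _ => integral_const_mul _ _
  -- variance of G is at most m * F
  have hDMsq_int : ∀ j, Integrable (fun θ => (D j θ - Mj j) ^ 2) μ := by
    intro j
    have h1 : MemLp (fun θ => D j θ - Mj j) 2 μ := (hL2' j).sub (memLp_const _)
    exact h1.integrable_sq
  have hvarD : ∀ j, ∫ θ, (D j θ - Mj j) ^ 2 ∂μ = variance (D j) μ := by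
    intro j
    rw [variance_eq_integral (hL2' j).aemeasurable]
  have hVarG : ∫ θ, (G θ - Mbar) ^ 2 ∂μ ≤ (m : ℝ) * F := by
    have hpt : ∀ θ, (G θ - Mbar) ^ 2 ≤ ∑ j, (D j θ - Mj j) ^ 2 := by
      intro θ
      have h0 : G θ - Mbar = ∑ j, e j * (D j θ - Mj j) := by
        rw [hGsum θ, hMbar_sum, ← Finset.sum_sub_distrib]
        exact Finset.sum_congr rfl fun j _ => by ring
      rw [h0]
      calc (∑ j, e j * (D j θ - Mj j)) ^ 2
          ≤ (∑ j, e j ^ 2) * ∑ j, (D j θ - Mj j) ^ 2 :=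
            Finset.sum_mul_sq_le_sq_mul_sq _ _ _
        _ = ∑ j, (D j θ - Mj j) ^ 2 := by rw [he, one_mul]
    calc ∫ θ, (G θ - Mbar) ^ 2 ∂μ
        ≤ ∫ θ, ∑ j, (D j θ - Mj j) ^ 2 ∂μ := by
          refine integral_mono_of_nonneg (Filter.Eventually.of_forall fun θ => sq_nonneg _)
            (integrable_finset_sum _ fun j _ => hDMsq_int j)
            (Filter.Eventually.of_forall hpt)
      _ = ∑ j, ∫ θ, (D j θ - Mj j) ^ 2 ∂μ :=
          integral_finset_sum _ fun j _ => hDMsq_int j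
      _ = ∑ j, variance (D j) μ := Finset.sum_congr rfl fun j _ => hvarD j
      _ ≤ ∑ _j : Fin m, F := Finset.sum_le_sum fun j _ => hvar' j
      _ = (m : ℝ) * F := by simp [mul_comm]
  -- shift invariance of the centered second moment of G
  have hGshift_per : ∀ (θ : Fin m → ℝ) (i : Fin m),
      (fun x => (G x - Mbar) ^ 2) (θ + Pi.single i (2 * π))
        = (fun x => (G x - Mbar) ^ 2) θ := by
    intro θ i; simp only; rw [hGper]
  have hinner : ∀ t : ℝ, ∫ θ, (G (θ + t • e) - Mbar) ^ 2 ∂μ ≤ (m : ℝ) * F := by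
    intro t
    have := BarrenAux.integral_shift (m := m) (fun x => (G x - Mbar) ^ 2)
      (((hGcont.sub continuous_const).pow 2).measurable) hGshift_per (t • e)
    calc ∫ θ, (G (θ + t • e) - Mbar) ^ 2 ∂μ
        = ∫ θ, (G θ - Mbar) ^ 2 ∂μ := this
      _ ≤ (m : ℝ) * F := hVarG
  -- fundamental theorem of calculus
  have hψcont : ∀ θ : Fin m → ℝ, Continuous fun t : ℝ => G (θ + t • e) := by
    intro θ
    exact hGcont.comp (continuous_const.add (continuous_id.smul continuous_const))
  have hftc : ∀ θ : Fin m → ℝ,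
      C (θ + L • e) - C θ = ∫ t in (0:ℝ)..L, G (θ + t • e) := by
    intro θ
    have hderiv : ∀ t : ℝ, HasDerivAt (fun t : ℝ => C (θ + t • e)) (G (θ + t • e)) t := by
      intro t
      have h1 : HasDerivAt (fun t : ℝ => θ + t • e) e t := by
        have := ((hasDerivAt_id t).smul_const e).const_add θ
        simpa using this
      have h2 := (hCd (θ + t • e)).hasFDerivAt.comp_hasDerivAt t h1
      exact h2
    rw [intervalIntegral.integral_eq_sub_of_hasDerivAt (fun t _ => hderiv t)
      ((hψcont θ).intervalIntegrable 0 L)]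
    simp
  -- the shifted difference
  set X : (Fin m → ℝ) → ℝ := fun θ => C (θ + L • e) - C θ with hXdef
  have hXcont : Continuous X :=
    (hC.continuous.comp (continuous_id.add continuous_const)).sub hC.continuous
  obtain ⟨MC, hMC0, hMC⟩ := BarrenAux.bounded_of_periodic hC.continuous hper
  have hXmem : MemLp X 2 μ := by
    have hb : ∀ᵐ θ ∂μ, -(MC + MC) ≤ X θ ∧ X θ ≤ MC + MC := by
      refine Filter.Eventually.of_forall fun θ => ⟨?_, ?_⟩
      · have h1 := (abs_le.1 (hMC (θ + L • e))).1
        have h2 := (abs_le.1 (hMC θ)).2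
        show -(MC + MC) ≤ C (θ + L • e) - C θ
        linarith
      · have h1 := (abs_le.1 (hMC (θ + L • e))).2
        have h2 := (abs_le.1 (hMC θ)).1
        show C (θ + L • e) - C θ ≤ MC + MC
        linarith
    exact memLp_of_bounded hb hXcont.aestronglyMeasurable 2
  -- step 1 : variance bounded by second moment about L * Mbar
  have step1 : variance X μ ≤ ∫ θ, (X θ - L * Mbar) ^ 2 ∂μ :=
    BarrenAux.variance_le_integral_sq hXmem (L * Mbar)
  -- rewrite the centered difference as an integral
  have hXc : ∀ θ, X θ - L * Mbar = ∫ t in (0:ℝ)..L, (G (θ + t • e) - Mbar) := by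
    intro θ
    rw [intervalIntegral.integral_sub ((hψcont θ).intervalIntegrable 0 L)
      intervalIntegrable_const, intervalIntegral.integral_const]
    simp only [hXdef]
    rw [← hftc θ]
    simp only [sub_zero, smul_eq_mul]
  -- pointwise Cauchy-Schwarz
  have hCS : ∀ θ, (X θ - L * Mbar) ^ 2
      ≤ L * ∫ t in (0:ℝ)..L, (G (θ + t • e) - Mbar) ^ 2 := by
    intro θ
    rw [hXc θ]
    exact BarrenAux.sq_intervalIntegral_le hL ((hψcont θ).sub continuous_const)
  -- joint continuity and boundedness of the integrand
  have hjoint : Continuous (Function.uncurry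
      (fun (θ : Fin m → ℝ) (t : ℝ) => (G (θ + t • e) - Mbar) ^ 2)) := by
    apply Continuous.pow
    apply Continuous.sub _ continuous_const
    apply hGcont.comp
    exact (continuous_fst.add (continuous_snd.smul continuous_const))
  obtain ⟨MG, hMG0, hMG⟩ := BarrenAux.bounded_of_periodic hGcont hGper
  set B : ℝ := (MG + |Mbar|) ^ 2 with hBdef
  have hBnn : 0 ≤ B := sq_nonneg _
  have hbd : ∀ (θ : Fin m → ℝ) (t : ℝ), (G (θ + t • e) - Mbar) ^ 2 ≤ B := by
    intro θ t
    have h1 : |G (θ + t • e) - Mbar| ≤ MG + |Mbar| := by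
      calc |G (θ + t • e) - Mbar| ≤ |G (θ + t • e)| + |Mbar| := abs_sub _ _
        _ ≤ MG + |Mbar| := by have := hMG (θ + t • e); linarith
    calc (G (θ + t • e) - Mbar) ^ 2 = |G (θ + t • e) - Mbar| ^ 2 := (sq_abs _).symm
      _ ≤ (MG + |Mbar|) ^ 2 := by
          have h0 : (0:ℝ) ≤ |G (θ + t • e) - Mbar| := abs_nonneg _
          nlinarith
  -- step 2 : integrate the pointwise bound
  have hInt2 : Integrable (fun θ => L * ∫ t in (0:ℝ)..L, (G (θ + t • e) - Mbar) ^ 2) μ := by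
    have hcont2 : Continuous (fun θ : Fin m → ℝ =>
        ∫ t in (0:ℝ)..L, (G (θ + t • e) - Mbar) ^ 2) :=
      intervalIntegral.continuous_parametric_intervalIntegral_of_continuous' hjoint 0 L
    refine Integrable.mono' (integrable_const (|L| * (B * |L - 0|)))
      (continuous_const.mul hcont2).aestronglyMeasurable
      (Filter.Eventually.of_forall fun θ => ?_)
    rw [norm_mul]
    refine mul_le_mul_of_nonneg_left ?_ (norm_nonneg L)
    refine intervalIntegral.norm_integral_le_of_norm_le_const fun t _ => ?_
    rw [Real.norm_eq_abs, abs_of_nonneg (sq_nonneg _)]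
    exact hbd θ t
  have step2 : ∫ θ, (X θ - L * Mbar) ^ 2 ∂μ
      ≤ L * ∫ θ, (∫ t in (0:ℝ)..L, (G (θ + t • e) - Mbar) ^ 2) ∂μ := by
    conv_rhs => rw [← integral_const_mul]
    exact integral_mono_of_nonneg (Filter.Eventually.of_forall fun θ => sq_nonneg _)
      hInt2 (Filter.Eventually.of_forall hCS)
  -- swap the two integrals
  haveI hfinL : IsFiniteMeasure ((volume : Measure ℝ).restrict (Set.Ioc 0 L)) := by
    constructor
    rw [Measure.restrict_apply MeasurableSet.univ, Set.univ_inter, Real.volume_Ioc]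
    exact ENNReal.ofReal_lt_top
  have hswap : ∫ θ, (∫ t in (0:ℝ)..L, (G (θ + t • e) - Mbar) ^ 2) ∂μ
      = ∫ t in Set.Ioc (0:ℝ) L, (∫ θ, (G (θ + t • e) - Mbar) ^ 2 ∂μ) := by
    have h1 : ∀ θ : Fin m → ℝ, (∫ t in (0:ℝ)..L, (G (θ + t • e) - Mbar) ^ 2)
        = ∫ t in Set.Ioc (0:ℝ) L, (G (θ + t • e) - Mbar) ^ 2 := fun θ =>
      intervalIntegral.integral_of_le hL.le
    simp_rw [h1]
    refine integral_integral_swap ?_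
    refine Integrable.mono' (integrable_const B) hjoint.aestronglyMeasurable
      (Filter.Eventually.of_forall fun p => ?_)
    rw [Real.norm_eq_abs, abs_of_nonneg (sq_nonneg _)]
    exact hbd p.1 p.2
  -- step 3 : bound the inner integral
  have step3 : ∫ t in Set.Ioc (0:ℝ) L, (∫ θ, (G (θ + t • e) - Mbar) ^ 2 ∂μ)
      ≤ (m : ℝ) * F * L := by
    calc ∫ t in Set.Ioc (0:ℝ) L, (∫ θ, (G (θ + t • e) - Mbar) ^ 2 ∂μ)
        ≤ ∫ _t in Set.Ioc (0:ℝ) L, (m : ℝ) * F := by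
          refine integral_mono_of_nonneg
            (Filter.Eventually.of_forall fun t =>
              integral_nonneg fun θ => sq_nonneg _)
            (integrable_const _)
            (Filter.Eventually.of_forall fun t => hinner t)
      _ = (m : ℝ) * F * L := by
          rw [setIntegral_const, Real.volume_real_Ioc_of_le hL.le, sub_zero,
            smul_eq_mul]
          ring
  -- put everything together
  have hfinal : variance X μ ≤ L * ((m : ℝ) * F * L) := by
    calc variance X μ ≤ ∫ θ, (X θ - L * Mbar) ^ 2 ∂μ := step1
      _ ≤ L * ∫ θ, (∫ t in (0:ℝ)..L, (G (θ + t • e) - Mbar) ^ 2) ∂μ := step2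
      _ = L * ∫ t in Set.Ioc (0:ℝ) L, (∫ θ, (G (θ + t • e) - Mbar) ^ 2 ∂μ) := by
          rw [hswap]
      _ ≤ L * ((m : ℝ) * F * L) := mul_le_mul_of_nonneg_left step3 hL.le
  have hmono : L * ((m : ℝ) * F * L) ≤ (m : ℝ) ^ 2 * L ^ 2 * F := by
    have h0 : 0 ≤ ((m:ℝ) - 1) * ((m:ℝ) * (L ^ 2 * F)) :=
      mul_nonneg (by linarith) (mul_nonneg (by linarith) (by positivity))
    nlinarith
  exact hfinal.trans hmono
end

section
/- Let H be a Hermitian matrix with H² = I. Then for any matrix A, i[H, A] = e^{iπH/4} A e^{−iπH/4} − e^{−iπH/4} A e^{iπH/4}. -/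
open Real

lemma exp_I_smul_of_sq_one {d : ℕ} (M : Matrix (Fin d) (Fin d) ℂ)
    (h2 : M * M = 1) (t : ℂ) :
    NormedSpace.exp ((Complex.I * t) • M) =
      Complex.cos t • (1 : Matrix (Fin d) (Fin d) ℂ) + (Complex.I * Complex.sin t) • M := by
  have hMe : ∀ n : ℕ, M ^ (2 * n) = 1 := by
    intro n
    rw [pow_mul, pow_two, h2, one_pow]
  have hMo : ∀ n : ℕ, M ^ (2 * n + 1) = M := by
    intro n
    rw [pow_succ, hMe, one_mul]
  rw [NormedSpace.exp_eq_tsum ℂ]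
  refine HasSum.tsum_eq ?_
  refine HasSum.even_add_odd ?_ ?_
  · have h := (Complex.hasSum_cos t).smul_const (1 : Matrix (Fin d) (Fin d) ℂ)
    convert h using 2 with n
    · rfl
    rw [smul_pow, hMe, smul_smul]
    congr 1
    rw [mul_pow, pow_mul, Complex.I_sq, div_eq_mul_inv]
    ring
  · have h := ((Complex.hasSum_sin t).mul_left Complex.I).smul_const M
    convert h using 2 with n
    · rfl
    rw [smul_pow, hMo, smul_smul]
    congr 1
    rw [mul_pow, pow_succ, pow_mul, Complex.I_sq, div_eq_mul_inv]
    ring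

lemma key_conj_identity {d : ℕ} (H A : Matrix (Fin d) (Fin d) ℂ) (c s : ℂ) :
    (c • (1 : Matrix (Fin d) (Fin d) ℂ) + s • H) * A * (c • 1 + (-s) • H) -
      (c • 1 + (-s) • H) * A * (c • (1 : Matrix (Fin d) (Fin d) ℂ) + s • H) =
      (2 * c * s) • (H * A - A * H) := by
  simp only [add_mul, mul_add, smul_mul_assoc, mul_smul_comm, one_mul, mul_one, smul_smul,
    neg_smul, smul_neg, smul_sub, neg_neg, mul_neg, neg_mul]
  module

/-- For a Hermitian involution `H` (so `H² = 1`) and any matrix `A`,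
`i[H,A] = e^{iπH/4} A e^{-iπH/4} - e^{-iπH/4} A e^{iπH/4}`. -/
theorem commutator_eq_shifted_conjugations {d : ℕ}
    (H A : Matrix (Fin d) (Fin d) ℂ) (hH : H.IsHermitian) (h2 : H * H = 1) :
    Complex.I • (H * A - A * H) =
      NormedSpace.exp ((Complex.I * (π / 4 : ℝ)) • H) * A *
        NormedSpace.exp ((-(Complex.I * (π / 4 : ℝ))) • H) -
      NormedSpace.exp ((-(Complex.I * (π / 4 : ℝ))) • H) * A *
        NormedSpace.exp ((Complex.I * (π / 4 : ℝ)) • H) := by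
  have hneg : (-(Complex.I * ((π / 4 : ℝ) : ℂ))) • H = (Complex.I * (-((π / 4 : ℝ) : ℂ))) • H := by
    rw [mul_neg]
  have hp := exp_I_smul_of_sq_one H h2 ((π / 4 : ℝ) : ℂ)
  have hm := exp_I_smul_of_sq_one H h2 (-((π / 4 : ℝ) : ℂ))
  rw [hneg, hp, hm, Complex.cos_neg, Complex.sin_neg, mul_neg]
  rw [key_conj_identity H A (Complex.cos ((π / 4 : ℝ) : ℂ)) (Complex.I * Complex.sin ((π / 4 : ℝ) : ℂ))]
  have hsq : ((Real.sqrt 2 : ℝ) : ℂ) * ((Real.sqrt 2 : ℝ) : ℂ) = 2 := by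
    rw [← Complex.ofReal_mul, Real.mul_self_sqrt (by norm_num)]
    norm_num
  have hcs : 2 * Complex.cos ((π / 4 : ℝ) : ℂ) * (Complex.I * Complex.sin ((π / 4 : ℝ) : ℂ))
      = Complex.I := by
    rw [← Complex.ofReal_cos, ← Complex.ofReal_sin, Real.cos_pi_div_four, Real.sin_pi_div_four]
    push_cast
    linear_combination (Complex.I / 2) * hsq
  rw [hcs]
end

section
/- Let H be Hermitian with H² = I, let ρ and O be matrices, and define f(θ) = Tr[e^{−iθH/2} ρ e^{iθH/2} O]. Then f'(θ) = (f(θ + π/2) − f(θ − π/2))/2. -/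
open Real

lemma exp_smul_invol {d : ℕ} (H : Matrix (Fin d) (Fin d) ℂ) (h2 : H * H = 1) (z : ℂ) :
    NormedSpace.exp (z • H) =
      Complex.cosh z • (1 : Matrix (Fin d) (Fin d) ℂ) + Complex.sinh z • H := by
  set P : Matrix (Fin d) (Fin d) ℂ := (1/2 : ℂ) • (1 + H) with hP
  set Q : Matrix (Fin d) (Fin d) ℂ := (1/2 : ℂ) • (1 - H) with hQ
  have hPH : P * H = P := by
    rw [hP, Matrix.smul_mul, add_mul, one_mul, ← h2]
    rw [h2]; congr 1; abel
  have hQH : Q * H = -Q := by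
    rw [hQ, Matrix.smul_mul, sub_mul, one_mul, h2, ← smul_neg]
    congr 1; abel
  have hpow : ∀ n : ℕ, (z • H) ^ n = z ^ n • P + (-z) ^ n • Q := by
    intro n
    induction n with
    | zero =>
      simp only [pow_zero, one_smul, hP, hQ, ← smul_add]
      rw [show (1:Matrix (Fin d) (Fin d) ℂ) + H + (1 - H) = (2:ℂ) • 1 by
        rw [two_smul]; abel]
      rw [smul_smul]; norm_num
    | succ n ih =>
      rw [pow_succ, ih, add_mul]
      simp only [Matrix.smul_mul, hPH, hQH, Matrix.mul_smul, smul_smul, smul_neg, pow_succ]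
      module
  have hsum : ∀ w : ℂ, Summable (fun n : ℕ => (n.factorial : ℂ)⁻¹ * w ^ n) := by
    intro w
    simpa [smul_eq_mul] using NormedSpace.expSeries_summable' (𝕂 := ℂ) (𝔸 := ℂ) w
  have hexp : ∀ w : ℂ, ∑' n : ℕ, (n.factorial : ℂ)⁻¹ * w ^ n = Complex.exp w := by
    intro w
    rw [Complex.exp_eq_exp_ℂ, NormedSpace.exp_eq_tsum (𝕂 := ℂ)]
    simp [smul_eq_mul]
  rw [NormedSpace.exp_eq_tsum (𝕂 := ℂ)]
  calc ∑' n : ℕ, ((n.factorial : ℂ)⁻¹) • (z • H) ^ n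
      = ∑' n : ℕ, (((n.factorial : ℂ)⁻¹ * z ^ n) • P + ((n.factorial : ℂ)⁻¹ * (-z) ^ n) • Q) := by
        congr 1; funext n; rw [hpow n]; module
    _ = (∑' n : ℕ, ((n.factorial : ℂ)⁻¹ * z ^ n) • P) + ∑' n : ℕ, ((n.factorial : ℂ)⁻¹ * (-z) ^ n) • Q := by
        exact Summable.tsum_add ((hsum z).smul_const P) ((hsum (-z)).smul_const Q)
    _ = Complex.exp z • P + Complex.exp (-z) • Q := by
        rw [Summable.tsum_smul_const (hsum z), Summable.tsum_smul_const (hsum (-z)), hexp, hexp]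
    _ = Complex.cosh z • (1 : Matrix (Fin d) (Fin d) ℂ) + Complex.sinh z • H := by
        rw [hP, hQ, Complex.cosh, Complex.sinh]
        module

lemma exp_rot {d : ℕ} (H : Matrix (Fin d) (Fin d) ℂ) (h2 : H * H = 1) (t : ℝ) :
    NormedSpace.exp ((Complex.I * (t:ℝ)) • H) =
      Complex.cos t • (1 : Matrix (Fin d) (Fin d) ℂ) + (Complex.sin t * Complex.I) • H := by
  rw [show (Complex.I * (t:ℝ)) = (t:ℂ) * Complex.I by ring, exp_smul_invol H h2,
    Complex.cosh_mul_I, Complex.sinh_mul_I]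

lemma exp_rot_neg {d : ℕ} (H : Matrix (Fin d) (Fin d) ℂ) (h2 : H * H = 1) (t : ℝ) :
    NormedSpace.exp ((-(Complex.I * (t:ℝ))) • H) =
      Complex.cos t • (1 : Matrix (Fin d) (Fin d) ℂ) + (-(Complex.sin t) * Complex.I) • H := by
  rw [show (-(Complex.I * (t:ℝ))) = ((-t : ℝ) : ℂ) * Complex.I by push_cast; ring,
    exp_smul_invol H h2, Complex.cosh_mul_I, Complex.sinh_mul_I]
  push_cast
  rw [Complex.cos_neg, Complex.sin_neg]

lemma trig_form_deriv (a b c : ℂ) (f : ℝ → ℂ)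
    (hf : ∀ θ : ℝ, f θ = a + b * Complex.cos θ + c * Complex.sin θ) (θ : ℝ) :
    deriv f θ = (f (θ + π / 2) - f (θ - π / 2)) / 2 := by
  have hfe : f = fun θ : ℝ => a + b * Complex.cos θ + c * Complex.sin θ := funext hf
  have hd : HasDerivAt f (b * (-Complex.sin θ) + c * Complex.cos θ) θ := by
    rw [hfe]
    exact (((Complex.hasDerivAt_cos θ).comp_ofReal.const_mul b).const_add a).add
      ((Complex.hasDerivAt_sin θ).comp_ofReal.const_mul c)
  rw [hd.deriv, hf, hf]
  have h1 : ((θ + π/2 : ℝ) : ℂ) = (θ:ℂ) + (π/2 : ℝ) := by push_cast; ring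
  have h2 : ((θ - π/2 : ℝ) : ℂ) = (θ:ℂ) - (π/2 : ℝ) := by push_cast; ring
  have hc : Complex.cos ((π/2 : ℝ) : ℂ) = 0 := by
    rw [← Complex.ofReal_cos, Real.cos_pi_div_two]; norm_num
  have hs : Complex.sin ((π/2 : ℝ) : ℂ) = 1 := by
    rw [← Complex.ofReal_sin, Real.sin_pi_div_two]; norm_num
  rw [h1, h2, Complex.cos_add, Complex.sin_add, Complex.cos_sub, Complex.sin_sub, hc, hs]
  ring

/-- The parameter shift rule: for a Hermitian involution `H` and matrices `ρ`, `O`, the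
function `f(θ) = Tr[e^{-iθH/2} ρ e^{iθH/2} O]` satisfies
`f'(θ) = (f(θ + π/2) - f(θ - π/2)) / 2`. -/
theorem parameter_shift_rule {d : ℕ}
    (H ρ O : Matrix (Fin d) (Fin d) ℂ) (hH : H.IsHermitian) (h2 : H * H = 1)
    (f : ℝ → ℂ)
    (hf : ∀ θ : ℝ, f θ =
      (NormedSpace.exp ((-(Complex.I * (θ / 2 : ℝ))) • H) * ρ *
        NormedSpace.exp ((Complex.I * (θ / 2 : ℝ)) • H) * O).trace) :
    ∀ θ : ℝ, deriv f θ = (f (θ + π / 2) - f (θ - π / 2)) / 2 := by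
  set T1 := (ρ * O).trace
  set T2 := (ρ * H * O).trace
  set T3 := (H * ρ * O).trace
  set T4 := (H * ρ * H * O).trace
  apply trig_form_deriv ((T1 + T4)/2) ((T1 - T4)/2) (Complex.I * (T2 - T3)/2)
  intro θ
  rw [hf θ, exp_rot H h2, exp_rot_neg H h2]
  simp only [Matrix.add_mul, Matrix.mul_add, Matrix.smul_mul, Matrix.mul_smul,
    Matrix.trace_add, Matrix.trace_smul, smul_smul, Matrix.one_mul, Matrix.mul_one,
    smul_eq_mul]
  have hsq : Complex.sin ((θ/2 : ℝ) : ℂ) ^ 2 = 1 - Complex.cos ((θ/2 : ℝ) : ℂ) ^ 2 := by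
    linear_combination Complex.sin_sq_add_cos_sq ((θ/2 : ℝ) : ℂ)
  have hI : Complex.I * Complex.I = -1 := Complex.I_mul_I
  have hθ : ((θ : ℝ) : ℂ) = 2 * ((θ/2 : ℝ) : ℂ) := by push_cast; ring
  rw [hθ, Complex.cos_two_mul, Complex.sin_two_mul]
  linear_combination (-(Complex.sin ((θ/2:ℝ):ℂ))^2 * T4) * hI + T4 * hsq
end

section
/- For the global cost C_G(θ) = 1 − ∏_{j=1}^n cos²(θ_j/2) with θ uniform on [0,2π]^n, the variance of the partial derivative with respect to θ_k equals (1/8)·(3/8)^{n−1}. -/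
open MeasureTheory ProbabilityTheory Real

noncomputable def unif1 : Measure ℝ :=
  (ENNReal.ofReal (2 * π))⁻¹ • volume.restrict (Set.Icc 0 (2 * π))

instance unif1_prob : IsProbabilityMeasure unif1 := by
  constructor
  rw [unif1]
  simp only [Measure.smul_apply, Measure.restrict_apply MeasurableSet.univ, Set.univ_inter,
    Real.volume_Icc, smul_eq_mul]
  rw [show (2 * π - 0) = 2 * π by ring, ENNReal.inv_mul_cancel]
  · exact (ENNReal.ofReal_pos.mpr (by positivity)).ne'
  · exact ENNReal.ofReal_ne_top

lemma integral_unif1 (f : ℝ → ℝ) :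
    ∫ x, f x ∂unif1 = (2 * π)⁻¹ * ∫ x in (0:ℝ)..(2 * π), f x := by
  rw [unif1, integral_smul_measure, MeasureTheory.integral_Icc_eq_integral_Ioc,
    ← intervalIntegral.integral_of_le (by positivity), ENNReal.toReal_inv,
    ENNReal.toReal_ofReal (by positivity), smul_eq_mul]

lemma int_sc : ∫ x, sin (x / 2) * cos (x / 2) ∂unif1 = 0 := by
  rw [integral_unif1]
  have h : ∀ x : ℝ, sin (x / 2) * cos (x / 2) = sin x / 2 := by
    intro x
    have := Real.sin_two_mul (x / 2)
    rw [show 2 * (x / 2) = x by ring] at this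
    rw [this]; ring
  simp only [h]
  rw [intervalIntegral.integral_div, integral_sin]
  simp [Real.cos_two_pi]

lemma int_sc_sq : ∫ x, (sin (x / 2) * cos (x / 2)) ^ 2 ∂unif1 = 1 / 8 := by
  rw [integral_unif1]
  have h : ∀ x : ℝ, (sin (x / 2) * cos (x / 2)) ^ 2 = sin x ^ 2 / 4 := by
    intro x
    have := Real.sin_two_mul (x / 2)
    rw [show 2 * (x / 2) = x by ring] at this
    rw [this]; ring
  simp only [h]
  rw [intervalIntegral.integral_div, integral_sin_sq]
  simp only [Real.sin_two_pi, Real.sin_zero, Real.cos_two_pi, Real.cos_zero]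
  field_simp
  ring

lemma cos_half_sq (x : ℝ) : cos (x / 2) ^ 2 = 1 / 2 + cos x / 2 := by
  have := Real.cos_sq (x / 2)
  rwa [show 2 * (x / 2) = x by ring] at this

lemma int_cos_two : ∫ x in (0:ℝ)..(2 * π), cos (2 * x) = 0 := by
  have hco : ∀ x ∈ Set.uIcc (0:ℝ) (2 * π), HasDerivAt (fun x => sin (2 * x) / 2) (cos (2 * x)) x := by
    intro x _
    have h2 : HasDerivAt (fun x : ℝ => 2 * x) 2 x := by simpa using (hasDerivAt_id x).const_mul 2
    have := ((Real.hasDerivAt_sin (2 * x)).comp x h2).div_const 2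
    exact this.congr_deriv (by ring)
  rw [intervalIntegral.integral_eq_sub_of_hasDerivAt hco
    (by apply Continuous.intervalIntegrable; fun_prop)]
  have : sin (2 * (2 * π)) = 0 := by rw [Real.sin_two_mul]; simp [Real.sin_two_pi]
  simp [this]

lemma int_c2 : ∫ x, cos (x / 2) ^ 2 ∂unif1 = 1 / 2 := by
  rw [integral_unif1]
  simp only [cos_half_sq]
  rw [intervalIntegral.integral_add (intervalIntegrable_const)
    (by apply Continuous.intervalIntegrable; fun_prop)]
  have h1 : (∫ x in (0:ℝ)..(2 * π), cos x / 2) = 0 := by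
    rw [intervalIntegral.integral_div, integral_cos]; simp [Real.sin_two_pi]
  rw [h1, intervalIntegral.integral_const, smul_eq_mul]
  have hpi : π ≠ 0 := Real.pi_ne_zero
  field_simp
  ring

lemma int_c4 : ∫ x, (cos (x / 2) ^ 2) ^ 2 ∂unif1 = 3 / 8 := by
  rw [integral_unif1]
  have h : ∀ x : ℝ, (cos (x / 2) ^ 2) ^ 2 = 3 / 8 + (cos x / 2 + cos (2 * x) / 8) := by
    intro x
    rw [cos_half_sq x]
    have h2 := Real.cos_sq x
    nlinarith [h2]
  simp only [h]
  rw [intervalIntegral.integral_add (intervalIntegrable_const)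
    (by apply Continuous.intervalIntegrable; fun_prop),
    intervalIntegral.integral_add (by apply Continuous.intervalIntegrable; fun_prop)
    (by apply Continuous.intervalIntegrable; fun_prop)]
  have h1 : (∫ x in (0:ℝ)..(2 * π), cos x / 2) = 0 := by
    rw [intervalIntegral.integral_div, integral_cos]; simp [Real.sin_two_pi]
  have h2 : (∫ x in (0:ℝ)..(2 * π), cos (2 * x) / 8) = 0 := by
    rw [intervalIntegral.integral_div, int_cos_two]; simp
  rw [h1, h2, intervalIntegral.integral_const, smul_eq_mul]
  have hpi : π ≠ 0 := Real.pi_ne_zero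
  field_simp
  ring

lemma fderiv_apply_eq (n : ℕ) (k : Fin n) (θ : Fin n → ℝ) :
    fderiv ℝ (fun θ : Fin n → ℝ => 1 - ∏ j, Real.cos (θ j / 2) ^ 2) θ (Pi.single k 1)
      = ∏ j, (if j = k then sin (θ j / 2) * cos (θ j / 2) else cos (θ j / 2) ^ 2) := by
  classical
  set g : Fin n → (Fin n → ℝ) → ℝ := fun i θ => cos (θ i / 2) ^ 2 with hg
  set g' : Fin n → (Fin n → ℝ) →L[ℝ] ℝ := fun i =>
    (-(sin (θ i / 2) * cos (θ i / 2))) • ContinuousLinearMap.proj i with hg'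
  have hgi : ∀ i ∈ Finset.univ, HasFDerivAt (g i) (g' i) θ := by
    intro i _
    have h1 : HasDerivAt (fun x : ℝ => cos (x / 2) ^ 2)
        (-(sin (θ i / 2) * cos (θ i / 2))) (θ i) := by
      have h2 : HasDerivAt (fun x : ℝ => cos (x / 2)) (-sin (θ i / 2) * (1 / 2)) (θ i) := by
        have := (Real.hasDerivAt_cos (θ i / 2)).comp (θ i) ((hasDerivAt_id (θ i)).div_const 2)
        simpa [Function.comp_def] using this
      have h3 := h2.pow 2
      exact h3.congr_deriv (by ring)
    exact h1.comp_hasFDerivAt θ (hasFDerivAt_apply (𝕜 := ℝ) (F' := fun _ : Fin n => ℝ) i θ)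
  have hprod := HasFDerivAt.finset_prod hgi
  have hf : HasFDerivAt (fun θ : Fin n → ℝ => 1 - ∏ j, Real.cos (θ j / 2) ^ 2)
      (0 - ∑ i, (∏ j ∈ Finset.univ.erase i, g j θ) • g' i) θ :=
    (hasFDerivAt_const (1:ℝ) θ).sub hprod
  rw [hf.fderiv]
  simp only [hg', ContinuousLinearMap.sub_apply, ContinuousLinearMap.zero_apply,
    ContinuousLinearMap.sum_apply, ContinuousLinearMap.smul_apply,
    ContinuousLinearMap.proj_apply, smul_eq_mul]
  rw [Finset.sum_eq_single k]
  · rw [Pi.single_eq_same]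
    rw [← Finset.mul_prod_erase Finset.univ _ (Finset.mem_univ k), if_pos rfl]
    have : ∏ j ∈ Finset.univ.erase k,
        (if j = k then sin (θ j / 2) * cos (θ j / 2) else cos (θ j / 2) ^ 2)
        = ∏ j ∈ Finset.univ.erase k, g j θ := by
      apply Finset.prod_congr rfl
      intro j hj
      rw [if_neg (Finset.ne_of_mem_erase hj)]
    rw [this]
    ring
  · intro b _ hbk
    rw [Pi.single_eq_of_ne hbk]
    ring
  · intro h
    exact absurd (Finset.mem_univ k) h

/-- For the global cost C_G(θ) = 1 - ∏ cos²(θⱼ/2) with θ uniform on [0,2π]^n,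
the variance of the partial derivative with respect to θ_k is (1/8)(3/8)^(n-1). -/
theorem variance_partial_global_cost (n : ℕ) (k : Fin n) :
    variance
      (fun θ => fderiv ℝ
        (fun θ : Fin n → ℝ => 1 - ∏ j, Real.cos (θ j / 2) ^ 2) θ (Pi.single k 1))
      (unifTorus n)
      = (1 / 8) * (3 / 8) ^ (n - 1) := by
  classical
  set h : Fin n → ℝ → ℝ := fun j x =>
    if j = k then sin (x / 2) * cos (x / 2) else cos (x / 2) ^ 2 with hh
  have hrw : (fun θ : Fin n → ℝ => fderiv ℝ
      (fun θ : Fin n → ℝ => 1 - ∏ j, Real.cos (θ j / 2) ^ 2) θ (Pi.single k 1))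
      = fun θ => ∏ j, h j (θ j) := funext fun θ => fderiv_apply_eq n k θ
  rw [hrw]
  have hTorus : unifTorus n = Measure.pi fun _ => unif1 := rfl
  rw [hTorus]
  haveI : IsProbabilityMeasure (Measure.pi fun _ : Fin n => unif1) := by infer_instance
  -- continuity and boundedness
  have hcont : ∀ j, Continuous (h j) := by
    intro j
    rcases eq_or_ne j k with hj | hj
    · have he : h j = fun x => sin (x / 2) * cos (x / 2) := by
        funext x; simp [hh, hj]
      rw [he]; fun_prop
    · have he : h j = fun x => cos (x / 2) ^ 2 := by
        funext x; simp [hh, hj]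
      rw [he]; fun_prop
  have hXcont : Continuous (fun θ : Fin n → ℝ => ∏ j, h j (θ j)) := by
    apply continuous_finset_prod
    intro j _
    exact (hcont j).comp (continuous_apply j)
  have hbound : ∀ j x, |h j x| ≤ 1 := by
    intro j x
    rcases eq_or_ne j k with hj | hj
    · simp only [hh, hj, if_pos rfl]
      calc |sin (x / 2) * cos (x / 2)| = |sin (x / 2)| * |cos (x / 2)| := abs_mul _ _
        _ ≤ 1 * 1 := mul_le_mul (Real.abs_sin_le_one _) (Real.abs_cos_le_one _)
            (abs_nonneg _) zero_le_one
        _ = 1 := one_mul 1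
    · simp only [hh, if_neg hj, abs_pow, sq_abs]
      nlinarith [Real.cos_le_one (x / 2), Real.neg_one_le_cos (x / 2)]
  have hXbound : ∀ θ : Fin n → ℝ, ‖∏ j, h j (θ j)‖ ≤ 1 := by
    intro θ
    rw [Real.norm_eq_abs, Finset.abs_prod]
    calc ∏ j, |h j (θ j)| ≤ ∏ _j : Fin n, 1 :=
          Finset.prod_le_prod (fun j _ => abs_nonneg _) (fun j _ => hbound j (θ j))
      _ = 1 := Finset.prod_const_one
  have hmem : MemLp (fun θ : Fin n → ℝ => ∏ j, h j (θ j)) 2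
      (Measure.pi fun _ : Fin n => unif1) :=
    MemLp.of_bound hXcont.aestronglyMeasurable 1 (Filter.Eventually.of_forall hXbound)
  rw [variance_eq_sub hmem]
  -- compute the two integrals via Fubini
  letI : MeasureSpace ℝ := ⟨unif1⟩
  haveI : SigmaFinite (volume : Measure ℝ) := by
    show SigmaFinite unif1; infer_instance
  have hvol : (Measure.pi fun _ : Fin n => unif1) = (volume : Measure (Fin n → ℝ)) := rfl
  have hmean : ∫ θ, (∏ j, h j (θ j)) ∂(Measure.pi fun _ : Fin n => unif1) = 0 := by
    rw [hvol]
    rw [MeasureTheory.integral_fintype_prod_volume_eq_prod (ι := Fin n) h]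
    apply Finset.prod_eq_zero (Finset.mem_univ k)
    simp only [hh, if_pos rfl]
    exact int_sc
  have hsq : ∫ θ, (∏ j, h j (θ j)) ^ 2 ∂(Measure.pi fun _ : Fin n => unif1)
      = (1 / 8) * (3 / 8) ^ (n - 1) := by
    rw [hvol]
    have : ∀ θ : Fin n → ℝ, (∏ j, h j (θ j)) ^ 2 = ∏ j, (h j (θ j)) ^ 2 := by
      intro θ; rw [← Finset.prod_pow]
    simp only [this]
    rw [MeasureTheory.integral_fintype_prod_volume_eq_prod (ι := Fin n) (fun j x => (h j x) ^ 2)]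
    have hfac : ∀ j, (∫ x : ℝ, (h j x) ^ 2) = if j = k then (1/8 : ℝ) else 3/8 := by
      intro j
      show (∫ x, (h j x) ^ 2 ∂unif1) = _
      rcases eq_or_ne j k with hj | hj
      · simp only [hh, hj, if_pos rfl]; exact int_sc_sq
      · simp only [hh, if_neg hj]; exact int_c4
    rw [Finset.prod_congr rfl (fun j _ => hfac j)]
    rw [← Finset.mul_prod_erase Finset.univ _ (Finset.mem_univ k), if_pos rfl]
    rw [Finset.prod_congr rfl (fun j hj => if_neg (Finset.ne_of_mem_erase hj)),
      Finset.prod_const, Finset.card_erase_of_mem (Finset.mem_univ k),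
      Finset.card_univ, Fintype.card_fin]
  show (∫ x, ((fun θ : Fin n → ℝ => ∏ j, h j (θ j)) ^ 2) x ∂(Measure.pi fun _ : Fin n => unif1))
      - (∫ x, (∏ j, h j (x j)) ∂(Measure.pi fun _ : Fin n => unif1)) ^ 2
      = (1 / 8) * (3 / 8) ^ (n - 1)
  simp only [Pi.pow_apply]
  rw [hmean, hsq]
  ring
end

section
/- For the global cost C_G(θ) = 1 − ∏_{j=1}^n cos²(θ_j/2) with θ uniform on [0,2π]^n, the mean is E[C_G] = 1 − 2^{−n} and the variance is Var[C_G] = (3/8)^n − (1/4)^n, which vanishes exponentially in n. -/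
open MeasureTheory ProbabilityTheory Real
open intervalIntegral

noncomputable def unifI : Measure ℝ :=
  (ENNReal.ofReal (2 * π))⁻¹ • volume.restrict (Set.Icc 0 (2 * π))

instance : IsProbabilityMeasure unifI := by
  constructor
  rw [unifI, Measure.smul_apply, Measure.restrict_apply MeasurableSet.univ, Set.univ_inter,
    Real.volume_Icc]
  simp only [smul_eq_mul, sub_zero]
  rw [ENNReal.inv_mul_cancel]
  · simp [ENNReal.ofReal_eq_zero, not_le, Real.two_pi_pos, Real.pi_pos]
  · exact ENNReal.ofReal_ne_top

lemma integral_unifI (f : ℝ → ℝ) :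
    ∫ x, f x ∂unifI = (2 * π)⁻¹ * ∫ x in (0:ℝ)..(2*π), f x := by
  rw [unifI, MeasureTheory.integral_smul_measure, MeasureTheory.integral_Icc_eq_integral_Ioc,
    ← intervalIntegral.integral_of_le Real.two_pi_pos.le]
  simp [ENNReal.toReal_inv, ENNReal.toReal_ofReal Real.two_pi_pos.le, Real.pi_pos.le]

lemma I1 : ∫ x, cos (x/2)^2 ∂unifI = 1/2 := by
  rw [integral_unifI]
  have h : ∀ x : ℝ, cos (x/2)^2 = 1/2 + cos x / 2 := by
    intro x; rw [Real.cos_sq]; ring_nf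
  simp_rw [h]
  rw [intervalIntegral.integral_add (intervalIntegrable_const)
    ((Real.continuous_cos.intervalIntegrable _ _).div_const 2)]
  simp only [intervalIntegral.integral_div, integral_cos,
    intervalIntegral.integral_const, Real.sin_two_pi, Real.sin_zero, smul_eq_mul, sub_zero]
  field_simp
  ring

lemma I2 : ∫ x, cos (x/2)^4 ∂unifI = 3/8 := by
  rw [integral_unifI]
  have h : ∀ x : ℝ, cos (x/2)^4 = 3/8 + cos x / 2 + cos (2*x) / 8 := by
    intro x
    have h1 : cos (x/2)^2 = 1/2 + cos x / 2 := by rw [Real.cos_sq]; ring_nf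
    have h2 : cos x ^2 = 1/2 + cos (2*x) / 2 := by rw [Real.cos_sq]
    have h3 : cos (x/2)^4 = (cos (x/2)^2)^2 := by ring
    rw [h3, h1, show (1/2 + cos x/2)^2 = 1/4 + cos x/2 + (cos x^2)/4 by ring, h2]
    ring
  simp_rw [h]
  have hc2 : IntervalIntegrable (fun x : ℝ => Real.cos (2*x)) volume 0 (2*π) :=
    (by continuity : Continuous fun x : ℝ => Real.cos (2*x)).intervalIntegrable _ _
  rw [intervalIntegral.integral_add (intervalIntegrable_const.add
      ((Real.continuous_cos.intervalIntegrable _ _).div_const 2)) (hc2.div_const 8),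
    intervalIntegral.integral_add intervalIntegrable_const
      ((Real.continuous_cos.intervalIntegrable _ _).div_const 2)]
  have h4 : ∫ x in (0:ℝ)..(2*π), cos (2*x) = 0 := by
    rw [intervalIntegral.integral_comp_mul_left (c := 2) Real.cos (by norm_num),
      integral_cos]
    have : Real.sin (2*(2*π)) = 0 := by
      have := Real.sin_nat_mul_pi 4
      push_cast at this
      convert this using 2; ring
    simp [this]
  simp only [intervalIntegral.integral_div, integral_cos, h4,
    intervalIntegral.integral_const, Real.sin_two_pi, Real.sin_zero, smul_eq_mul, sub_zero]
  field_simp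
  ring

lemma integral_pi_pow (f : ℝ → ℝ) (n : ℕ) :
    ∫ x : Fin n → ℝ, ∏ j, f (x j) ∂(Measure.pi fun _ => unifI) = (∫ x, f x ∂unifI) ^ n := by
  letI : MeasureSpace ℝ := ⟨unifI⟩
  haveI : SigmaFinite (volume : Measure ℝ) := (inferInstance : SigmaFinite unifI)
  have := MeasureTheory.integral_fintype_prod_eq_pow (𝕜 := ℝ) (ι := Fin n) f (μ := unifI)
  simpa using this

lemma cos_pow_prod_bound (k n : ℕ) (θ : Fin n → ℝ) :
    ‖∏ j, Real.cos (θ j / 2) ^ k‖ ≤ 1 := by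
  rw [Real.norm_eq_abs, Finset.abs_prod]
  refine Finset.prod_le_one (fun j _ => abs_nonneg _) (fun j _ => ?_)
  rw [abs_pow]
  exact pow_le_one₀ (abs_nonneg _) (Real.abs_cos_le_one _)

lemma cos_pow_prod_continuous (k n : ℕ) :
    Continuous (fun θ : Fin n → ℝ => ∏ j, Real.cos (θ j / 2) ^ k) :=
  continuous_finset_prod _ fun j _ =>
    (Real.continuous_cos.comp ((continuous_apply j).div_const 2)).pow k

/-- For the global cost C_G(θ) = 1 - ∏ cos²(θⱼ/2) with θ uniform on [0,2π]^n,
the mean is 1 - 2⁻ⁿ and the variance is (3/8)^n - (1/4)^n (exponentially vanishing). -/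
theorem mean_and_variance_global_cost (n : ℕ) :
    (∫ θ, (1 - ∏ j, Real.cos (θ j / 2) ^ 2) ∂(unifTorus n)
        = 1 - (1 / 2 : ℝ) ^ n) ∧
    (variance (fun θ : Fin n → ℝ => 1 - ∏ j, Real.cos (θ j / 2) ^ 2) (unifTorus n)
        = (3 / 8 : ℝ) ^ n - (1 / 4 : ℝ) ^ n) := by
  have hμ : unifTorus n = Measure.pi fun _ => unifI := rfl
  haveI : IsProbabilityMeasure (unifTorus n) := by rw [hμ]; infer_instance
  set P : (Fin n → ℝ) → ℝ := fun θ => ∏ j, Real.cos (θ j / 2) ^ 2 with hP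
  have hPmeas : AEStronglyMeasurable P (unifTorus n) :=
    (cos_pow_prod_continuous 2 n).aestronglyMeasurable
  have hPint : Integrable P (unifTorus n) :=
    memLp_one_iff_integrable.mp <| MemLp.of_bound hPmeas 1
      (Filter.Eventually.of_forall (cos_pow_prod_bound 2 n))
  have hQint : Integrable (fun θ : Fin n → ℝ => ∏ j, Real.cos (θ j / 2) ^ 4) (unifTorus n) :=
    memLp_one_iff_integrable.mp <| MemLp.of_bound
      (cos_pow_prod_continuous 4 n).aestronglyMeasurable 1
      (Filter.Eventually.of_forall (cos_pow_prod_bound 4 n))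
  have hEP : ∫ θ, P θ ∂(unifTorus n) = (1/2:ℝ)^n := by
    rw [hμ, hP]
    rw [integral_pi_pow (fun x => Real.cos (x/2)^2) n, I1]
  have hEQ : ∫ θ, (∏ j, Real.cos (θ j / 2) ^ 4) ∂(unifTorus n) = (3/8:ℝ)^n := by
    rw [hμ]
    rw [integral_pi_pow (fun x => Real.cos (x/2)^4) n, I2]
  have hmean : ∫ θ, (1 - P θ) ∂(unifTorus n) = 1 - (1/2:ℝ)^n := by
    rw [integral_sub (integrable_const 1) hPint, MeasureTheory.integral_const, probReal_univ, hEP]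
    simp
  refine ⟨hmean, ?_⟩
  have hX : MemLp (fun θ : Fin n → ℝ => 1 - P θ) 2 (unifTorus n) := by
    apply MemLp.of_bound
      ((continuous_const.sub (cos_pow_prod_continuous 2 n)).aestronglyMeasurable) 1
    filter_upwards with θ
    have h0 : 0 ≤ P θ := Finset.prod_nonneg fun j _ => sq_nonneg _
    have h1 : P θ ≤ 1 :=
      Finset.prod_le_one (fun j _ => sq_nonneg _) (fun j _ => Real.cos_sq_le_one _)
    show ‖1 - P θ‖ ≤ 1
    rw [Real.norm_eq_abs, abs_le]
    constructor <;> linarith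
  rw [variance_eq_sub hX]
  have hsq : (fun θ : Fin n → ℝ => 1 - P θ)^2
      = fun θ => (1 - 2 * P θ) + ∏ j, Real.cos (θ j / 2) ^ 4 := by
    funext θ
    simp only [Pi.pow_apply]
    have hp2 : (P θ)^2 = ∏ j, Real.cos (θ j / 2) ^ 4 := by
      rw [hP]
      simp only [← Finset.prod_pow]
      exact Finset.prod_congr rfl fun j _ => by ring
    have e : (1 - P θ)^2 = (1 - 2 * P θ) + (P θ)^2 := by ring
    rw [e, hp2]
  have hEX2 : ∫ θ, ((fun θ : Fin n → ℝ => 1 - P θ)^2) θ ∂(unifTorus n)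
      = 1 - 2*(1/2:ℝ)^n + (3/8:ℝ)^n := by
    simp only [hsq]
    have hint1 : Integrable (fun θ : Fin n → ℝ => 1 - 2 * P θ) (unifTorus n) :=
      (integrable_const 1).sub (hPint.const_mul 2)
    rw [integral_add hint1 hQint,
      integral_sub (integrable_const 1) (hPint.const_mul 2), MeasureTheory.integral_const,
      probReal_univ, MeasureTheory.integral_const_mul, hEP, hEQ]
    simp
  show (∫ θ, ((fun θ : Fin n → ℝ => 1 - P θ)^2) θ ∂(unifTorus n))
      - (∫ θ, (1 - P θ) ∂(unifTorus n))^2 = (3/8:ℝ)^n - (1/4:ℝ)^n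
  rw [hEX2, hmean]
  have h14 : ((1:ℝ)/4)^n = (1/2)^n * (1/2)^n := by
    rw [← mul_pow]; norm_num
  rw [h14]; ring
end
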